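/- For natural numbers n and j with j ≤ n and complex number a such that (2a+j)_k ≠ 0 for 0 ≤ k ≤ 2n, ∑_{k=0}^{2n} (-2n)_k (a)_k 2^k / ((2a+j)_k k!) = (2^{2n} (1/2)_n / (2a+j)_{2n}) · ∑_{r=0}^{⌊j/2⌋} (-1)^r C(j,2r) (-n)_r (a+j)_{n-r}. -/

import Mathlib

open Finset

/-- The Pochhammer symbol (rising factorial) `(x)_k = x (x+1) ⋯ (x+k-1)`. -/
noncomputable def poch (x : ℂ) (k : ℕ) : ℂ := (ascPochhammer ℂ k).eval x




@[simp] lemma poch_zero (x : ℂ) : poch x 0 = 1 := by simp [poch]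

lemma poch_succ (x : ℂ) (k : ℕ) : poch x (k + 1) = poch x k * (x + k) :=
  ascPochhammer_succ_eval _ _

lemma poch_succ_left (x : ℂ) (k : ℕ) : poch x (k + 1) = x * poch (x + 1) k := by
  unfold poch
  rw [ascPochhammer_succ_left, Polynomial.X_mul, Polynomial.eval_mul_X, Polynomial.eval_comp]
  simp [mul_comm]

lemma poch_add (x : ℂ) (i m : ℕ) : poch x (i + m) = poch x i * poch (x + i) m := by
  induction m with
  | zero => simp
  | succ m ih => rw [← add_assoc, poch_succ, ih, poch_succ]; push_cast; ring

lemma poch_neg_nat (M m : ℕ) : poch (-(M : ℂ)) m = (-1) ^ m * (M.descFactorial m : ℂ) := by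
  induction m with
  | zero => simp
  | succ m ih =>
    rw [poch_succ, ih, Nat.descFactorial_succ]
    rcases le_or_gt m M with hm | hm
    · push_cast [hm]; ring
    · have h1 : M.descFactorial m = 0 := Nat.descFactorial_eq_zero_iff_lt.2 hm
      simp [h1]

lemma fact_ne (k : ℕ) : (k.factorial : ℂ) ≠ 0 := Nat.cast_ne_zero.2 k.factorial_ne_zero

lemma poch_half (n : ℕ) :
    poch (1 / 2) n * 2 ^ (2 * n) * (n.factorial : ℂ) = ((2 * n).factorial : ℂ) := by
  induction n with
  | zero => simp
  | succ n ih =>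
    have e1 : 2 * (n + 1) = 2 * n + 1 + 1 := by ring
    rw [e1, Nat.factorial_succ, Nat.factorial_succ, poch_succ, Nat.factorial_succ,
      pow_succ, pow_succ]
    push_cast
    linear_combination (4 * (n : ℂ) ^ 2 + 6 * n + 2) * ih
lemma pascal_sum (N : ℕ) (w : ℕ → ℂ) :
    ∑ i ∈ range (N + 2), ((N + 1).choose i : ℂ) * w i
      = ∑ i ∈ range (N + 1), (N.choose i : ℂ) * (w i + w (i + 1)) := by
  rw [Finset.sum_range_succ']
  have e : ∀ i, (((N + 1).choose (i + 1) : ℕ) : ℂ) = (N.choose i : ℂ) + (N.choose (i + 1) : ℂ) := by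
    intro i; rw [Nat.choose_succ_succ]; push_cast; ring
  simp_rw [e, add_mul, mul_add]
  rw [Finset.sum_add_distrib, Finset.sum_add_distrib]
  have h2 : ∑ i ∈ range (N + 1), ((N.choose (i + 1) : ℕ) : ℂ) * w (i + 1)
        + (((N + 1).choose 0 : ℕ) : ℂ) * w 0
      = ∑ i ∈ range (N + 1), ((N.choose i : ℕ) : ℂ) * w i := by
    rw [Finset.sum_range_succ, Nat.choose_succ_self]
    rw [Finset.sum_range_succ' (fun i => ((N.choose i : ℕ) : ℂ) * w i) N]
    simp
  linear_combination h2

lemma vand (N : ℕ) (x y : ℂ) :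
    ∑ i ∈ range (N + 1), (N.choose i : ℂ) * poch x i * poch y (N - i) = poch (x + y) N := by
  induction N generalizing y with
  | zero => simp [poch_zero]
  | succ N ih =>
    have key : ∑ i ∈ range (N + 2), ((N + 1).choose i : ℂ)
          * (poch x i * poch y (N + 1 - i))
        = ∑ i ∈ range (N + 1), ((N.choose i : ℂ) * poch x i * poch y (N - i)) * (x + y + N) := by
      rw [pascal_sum N (fun i => poch x i * poch y (N + 1 - i))]
      refine Finset.sum_congr rfl fun i hi => ?_
      rw [Finset.mem_range] at hi
      have h1 : N + 1 - i = (N - i) + 1 := by omega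
      have h2 : N + 1 - (i + 1) = N - i := by omega
      have h3 : ((N - i : ℕ) : ℂ) = (N : ℂ) - i := by
        push_cast [Nat.cast_sub (by omega : i ≤ N)]; ring
      rw [h1, h2, poch_succ, poch_succ, h3]
      ring
    calc ∑ i ∈ range (N + 2), ((N + 1).choose i : ℂ) * poch x i * poch y (N + 1 - i)
        = ∑ i ∈ range (N + 2), ((N + 1).choose i : ℂ) * (poch x i * poch y (N + 1 - i)) := by
          simp_rw [mul_assoc]
      _ = ∑ i ∈ range (N + 1), ((N.choose i : ℂ) * poch x i * poch y (N - i)) * (x + y + N) :=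
          key
      _ = poch (x + y) N * (x + y + N) := by rw [← Finset.sum_mul, ih]
      _ = poch (x + y) (N + 1) := (poch_succ _ _).symm

lemma chu (M : ℕ) : ∀ x c : ℂ,
    ∑ m ∈ range (M + 1), (-1) ^ m * (M.choose m : ℂ) * poch x m * poch (c + m) (M - m)
      = poch (c - x) M := by
  induction M with
  | zero => intro x c; simp [poch_zero]
  | succ M ih =>
    intro x c
    have key : ∑ m ∈ range (M + 2), ((M + 1).choose m : ℂ)
          * ((-1) ^ m * poch x m * poch (c + m) (M + 1 - m))
        = ∑ m ∈ range (M + 1), ((-1) ^ m * (M.choose m : ℂ) * poch x m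
            * poch ((c + 1) + m) (M - m)) * (c - x) := by
      rw [pascal_sum M (fun m => (-1) ^ m * poch x m * poch (c + m) (M + 1 - m))]
      refine Finset.sum_congr rfl fun m hi => ?_
      rw [Finset.mem_range] at hi
      have h1 : M + 1 - m = (M - m) + 1 := by omega
      have h2 : M + 1 - (m + 1) = M - m := by omega
      have h4 : c + (m : ℂ) + 1 = (c + 1) + m := by ring
      have h5 : c + ((m : ℕ) + 1 : ℕ) = (c + 1) + m := by push_cast; ring
      rw [h1, h2, poch_succ_left, poch_succ, pow_succ, h4, h5]
      ring
    calc ∑ m ∈ range (M + 2), (-1) ^ m * ((M + 1).choose m : ℂ) * poch x m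
          * poch (c + m) (M + 1 - m)
        = ∑ m ∈ range (M + 2), ((M + 1).choose m : ℂ)
            * ((-1) ^ m * poch x m * poch (c + m) (M + 1 - m)) := by
          refine Finset.sum_congr rfl fun m _ => by ring
      _ = ∑ m ∈ range (M + 1), ((-1) ^ m * (M.choose m : ℂ) * poch x m
            * poch ((c + 1) + m) (M - m)) * (c - x) := key
      _ = poch ((c + 1) - x) M * (c - x) := by rw [← Finset.sum_mul, ih]
      _ = poch (c - x) (M + 1) := by
          rw [poch_succ_left]; rw [show (c - x) + 1 = (c + 1) - x by ring]; ring
noncomputable def Tsum (b : ℂ) (N : ℕ) : ℂ :=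
  ∑ i ∈ range (N + 1), (-1) ^ i * (N.choose i : ℂ) * poch b i * poch b (N - i)

noncomputable def Usum (b : ℂ) (N : ℕ) : ℂ :=
  ∑ i ∈ range (N + 1), (-1) ^ i * (N.choose i : ℂ) * poch b i * poch b (N - i) * i

lemma Trec (b : ℂ) (N : ℕ) : Tsum b (N + 1) = N * Tsum b N - 2 * Usum b N := by
  have key : Tsum b (N + 1)
      = ∑ i ∈ range (N + 1), ((N : ℂ) * ((-1) ^ i * (N.choose i : ℂ) * poch b i * poch b (N - i))
          - 2 * ((-1) ^ i * (N.choose i : ℂ) * poch b i * poch b (N - i) * i)) := by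
    unfold Tsum
    calc ∑ i ∈ range (N + 1 + 1), (-1) ^ i * ((N + 1).choose i : ℂ) * poch b i
          * poch b (N + 1 - i)
        = ∑ i ∈ range (N + 2), ((N + 1).choose i : ℂ)
            * ((-1) ^ i * poch b i * poch b (N + 1 - i)) := by
          refine Finset.sum_congr rfl fun i _ => by ring
      _ = _ := by
          rw [pascal_sum N (fun i => (-1) ^ i * poch b i * poch b (N + 1 - i))]
          refine Finset.sum_congr rfl fun i hi => ?_
          rw [Finset.mem_range] at hi
          have h1 : N + 1 - i = (N - i) + 1 := by omega
          have h2 : N + 1 - (i + 1) = N - i := by omega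
          have h3 : ((N - i : ℕ) : ℂ) = (N : ℂ) - i := by
            push_cast [Nat.cast_sub (by omega : i ≤ N)]; ring
          rw [h1, h2, poch_succ, poch_succ, pow_succ, h3]
          ring
  rw [key, Finset.sum_sub_distrib, ← Finset.mul_sum, ← Finset.mul_sum]
  rfl

lemma Urec (b : ℂ) (N : ℕ) : Usum b (N + 1) = -((N : ℂ) + 1) * (b * Tsum b N + Usum b N) := by
  have key : Usum b (N + 1)
      = ∑ i ∈ range (N + 1), (-((N : ℂ) + 1))
          * (b * ((-1) ^ i * (N.choose i : ℂ) * poch b i * poch b (N - i))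
            + ((-1) ^ i * (N.choose i : ℂ) * poch b i * poch b (N - i) * i)) := by
    unfold Usum
    rw [Finset.sum_range_succ']
    simp only [Nat.cast_zero, mul_zero, add_zero, Nat.succ_sub_succ]
    refine Finset.sum_congr rfl fun i hi => ?_
    have hch : (((N + 1).choose (i + 1) : ℕ) : ℂ) * ((i : ℂ) + 1) = ((N : ℂ) + 1) * (N.choose i : ℂ) := by
      exact_mod_cast congrArg (Nat.cast : ℕ → ℂ) (Nat.add_one_mul_choose_eq N i).symm
    rw [poch_succ, pow_succ]
    push_cast
    linear_combination (-(-1 : ℂ) ^ i) * poch b i * poch b (N - i) * (b + (i:ℂ)) * hch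
  rw [key, ← Finset.mul_sum, Finset.sum_add_distrib, ← Finset.mul_sum]
  rfl

lemma TU (b : ℂ) (m : ℕ) :
    (m.factorial : ℂ) * Tsum b (2 * m) = ((2 * m).factorial : ℂ) * poch b m
      ∧ (m.factorial : ℂ) * Usum b (2 * m) = m * ((2 * m).factorial : ℂ) * poch b m := by
  induction m with
  | zero => simp [Tsum, Usum, poch_zero]
  | succ m ih =>
    obtain ⟨ih1, ih2⟩ := ih
    have e1 : 2 * (m + 1) = 2 * m + 1 + 1 := by ring
    have t1 : Tsum b (2 * m + 1) = (2 * m : ℂ) * Tsum b (2 * m) - 2 * Usum b (2 * m) := by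
      have := Trec b (2 * m); push_cast at this ⊢; linear_combination this
    have u1 : Usum b (2 * m + 1)
        = -((2 * m : ℂ) + 1) * (b * Tsum b (2 * m) + Usum b (2 * m)) := by
      have := Urec b (2 * m); push_cast at this ⊢; linear_combination this
    have t2 : Tsum b (2 * m + 1 + 1)
        = ((2 * m : ℂ) + 1) * Tsum b (2 * m + 1) - 2 * Usum b (2 * m + 1) := by
      have := Trec b (2 * m + 1); push_cast at this ⊢; linear_combination this
    have u2 : Usum b (2 * m + 1 + 1)
        = -((2 * m : ℂ) + 1 + 1) * (b * Tsum b (2 * m + 1) + Usum b (2 * m + 1)) := by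
      have := Urec b (2 * m + 1); push_cast at this ⊢; linear_combination this
    rw [e1]
    have hfac : (((2 * m + 1 + 1).factorial : ℕ) : ℂ)
        = ((2 * m : ℂ) + 2) * ((2 * m : ℂ) + 1) * ((2 * m).factorial : ℂ) := by
      rw [Nat.factorial_succ, Nat.factorial_succ]; push_cast; ring
    have hfm : (((m + 1).factorial : ℕ) : ℂ) = ((m : ℂ) + 1) * (m.factorial : ℂ) := by
      rw [Nat.factorial_succ]; push_cast; ring
    have hp : poch b (m + 1) = poch b m * (b + m) := poch_succ b m
    constructor
    · rw [hfm, hfac, hp, t2, t1, u1]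
      linear_combination ((m : ℂ) + 1) * (2 * m + 1) * (2 * m + 2 * b) * ih1
    · rw [hfm, hfac, hp, u2, t1, u1]
      push_cast
      linear_combination ((m : ℂ) + 1) * (2 * m + 2) * b * ih1
        + ((m : ℂ) + 1) * (2 * m + 2) * (2 * b + 2 * m + 1) * ih2

lemma Tsum_odd (b : ℂ) (m : ℕ) : Tsum b (2 * m + 1) = 0 := by
  obtain ⟨ih1, ih2⟩ := TU b m
  have t1 : Tsum b (2 * m + 1) = (2 * m : ℂ) * Tsum b (2 * m) - 2 * Usum b (2 * m) := by
    have := Trec b (2 * m); push_cast at this ⊢; linear_combination this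
  have : (m.factorial : ℂ) * Tsum b (2 * m + 1) = 0 := by
    rw [t1]; linear_combination 2 * (m : ℂ) * ih1 - 2 * ih2
  rcases mul_eq_zero.1 this with h | h
  · exact absurd h (fact_ne m)
  · exact h

lemma Tsum_even (b : ℂ) (m : ℕ) :
    Tsum b (2 * m) = ((2 * m).factorial : ℂ) * poch b m / (m.factorial : ℂ) := by
  rw [eq_div_iff (fact_ne m)]
  linear_combination (TU b m).1

lemma sum_triangle (K : ℕ) (f : ℕ → ℕ → ℂ) :
    ∑ k ∈ range (K + 1), ∑ i ∈ range (k + 1), f k i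
      = ∑ i ∈ range (K + 1), ∑ m ∈ range (K - i + 1), f (i + m) i := by
  rw [Finset.sum_sigma', Finset.sum_sigma']
  refine Finset.sum_nbij' (fun p => ⟨p.2, p.1 - p.2⟩) (fun p => ⟨p.1 + p.2, p.1⟩) ?_ ?_ ?_ ?_ ?_
  · rintro ⟨k, i⟩ hp
    simp only [Finset.mem_sigma, Finset.mem_range] at hp ⊢
    omega
  · rintro ⟨i, m⟩ hp
    simp only [Finset.mem_sigma, Finset.mem_range] at hp ⊢
    omega
  · rintro ⟨k, i⟩ hp
    simp only [Finset.mem_sigma, Finset.mem_range] at hp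
    simp only [Sigma.mk.inj_iff]
    constructor
    · omega
    · exact heq_of_eq rfl
  · rintro ⟨i, m⟩ hp
    simp only [Finset.mem_sigma, Finset.mem_range] at hp
    simp only [Sigma.mk.inj_iff]
    refine ⟨trivial, heq_of_eq ?_⟩
    omega
  · rintro ⟨k, i⟩ hp
    simp only [Finset.mem_sigma, Finset.mem_range] at hp
    have : i + (k - i) = k := by omega
    rw [this]

lemma sum_even_odd (N : ℕ) (g : ℕ → ℂ) :
    ∑ s ∈ range (2 * N), g s = ∑ r ∈ range N, g (2 * r) + ∑ r ∈ range N, g (2 * r + 1) := by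
  induction N with
  | zero => simp
  | succ N ih =>
    have e : 2 * (N + 1) = 2 * N + 1 + 1 := by ring
    rw [e, Finset.sum_range_succ, Finset.sum_range_succ, Finset.sum_range_succ,
      Finset.sum_range_succ, ih]
    ring
theorem keylem (n j : ℕ) (hjn : j ≤ n) (a : ℂ) :
    ∀ (c b : ℂ), c = 2 * a + (j : ℂ) → b = a + (j : ℂ) →
    ∑ k ∈ range (2 * n + 1),
        poch (-(((2 * n : ℕ)) : ℂ)) k * poch a k * 2 ^ k * poch (c + k) (2 * n - k)
          / (k.factorial : ℂ)
      = (2 : ℂ) ^ (2 * n) * poch (1 / 2) n *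
          ∑ r ∈ range (j / 2 + 1),
            (-1 : ℂ) ^ r * (j.choose (2 * r) : ℂ) * poch (-(n : ℂ)) r * poch b (n - r) := by
  intro c b hc hb
  have hb' : -((j : ℕ) : ℂ) + b = a := by rw [hb]; ring
  calc ∑ k ∈ range (2 * n + 1),
        poch (-(((2 * n : ℕ)) : ℂ)) k * poch a k * 2 ^ k * poch (c + k) (2 * n - k)
          / (k.factorial : ℂ)
      = ∑ k ∈ range (2 * n + 1), ∑ i ∈ range (k + 1),
          poch (-(((2 * n : ℕ)) : ℂ)) k * poch a k * poch (c + k) (2 * n - k)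
            / (k.factorial : ℂ) * (k.choose i : ℂ) := by
        refine Finset.sum_congr rfl fun k _ => ?_
        rw [← Finset.mul_sum]
        rw [show (∑ i ∈ range (k + 1), (k.choose i : ℂ)) = 2 ^ k by
          norm_cast
          exact Nat.sum_range_choose k]
        ring
    _ = ∑ i ∈ range (2 * n + 1), ∑ m ∈ range (2 * n - i + 1),
          poch (-(((2 * n : ℕ)) : ℂ)) (i + m) * poch a (i + m)
            * poch (c + (i + m : ℕ)) (2 * n - (i + m)) / ((i + m).factorial : ℂ)
            * ((i + m).choose i : ℂ) :=
        sum_triangle (2 * n) (fun k i => poch (-(((2 * n : ℕ)) : ℂ)) k * poch a k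
          * poch (c + k) (2 * n - k) / (k.factorial : ℂ) * (k.choose i : ℂ))
    _ = ∑ i ∈ range (2 * n + 1), (poch (-(((2 * n : ℕ)) : ℂ)) i * poch a i / (i.factorial : ℂ))
          * ∑ m ∈ range (2 * n - i + 1), (-1) ^ m * ((2 * n - i).choose m : ℂ)
              * poch (a + i) m * poch ((c + i) + m) ((2 * n - i) - m) := by
        refine Finset.sum_congr rfl fun i hi => ?_
        rw [Finset.mem_range] at hi
        have hi' : i ≤ 2 * n := by omega
        rw [Finset.mul_sum]
        refine Finset.sum_congr rfl fun m hm => ?_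
        rw [Finset.mem_range] at hm
        have e1 : poch (-(((2 * n : ℕ)) : ℂ)) (i + m)
            = poch (-(((2 * n : ℕ)) : ℂ)) i * ((-1) ^ m * ((2 * n - i).descFactorial m : ℂ)) := by
          rw [poch_add]
          congr 1
          rw [show -(((2 * n : ℕ)) : ℂ) + (i : ℂ) = -((((2 * n - i : ℕ)) : ℂ)) by
            push_cast [Nat.cast_sub hi']; ring]
          exact poch_neg_nat _ m
        have e2 := poch_add a i m
        have e3 : c + ((i + m : ℕ) : ℂ) = (c + i) + m := by push_cast; ring
        have e4 : 2 * n - (i + m) = (2 * n - i) - m := by omega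
        have e5 : (((i + m).choose i : ℕ) : ℂ) * (i.factorial : ℂ) * (m.factorial : ℂ)
            = ((i + m).factorial : ℂ) := by
          exact_mod_cast congrArg (Nat.cast (R := ℂ)) (by
            simpa using Nat.choose_mul_factorial_mul_factorial (Nat.le_add_right i m))
        have e6 : (((2 * n - i).descFactorial m : ℕ) : ℂ)
            = (m.factorial : ℂ) * (((2 * n - i).choose m : ℕ) : ℂ) := by
          exact_mod_cast congrArg (Nat.cast (R := ℂ))
            (Nat.descFactorial_eq_factorial_mul_choose _ m)
        rw [e1, e2, e3, e4, e6]
        have hfi := fact_ne i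
        have hfm := fact_ne m
        have hfim := fact_ne (i + m)
        generalize poch (-(((2 * n : ℕ)) : ℂ)) i = A
        field_simp
        linear_combination (A * poch a i * poch (a + i) m
          * poch ((c + i) + m) ((2 * n - i) - m) * ((2 * n - i).choose m : ℂ)) * e5
    _ = ∑ i ∈ range (2 * n + 1),
          (poch (-(((2 * n : ℕ)) : ℂ)) i * poch a i / (i.factorial : ℂ)) * poch b (2 * n - i) := by
        refine Finset.sum_congr rfl fun i hi => ?_
        rw [chu (2 * n - i) (a + i) (c + i),
          show (c + (i : ℂ)) - (a + i) = b by rw [hc, hb]; ring]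
    _ = ∑ i ∈ range (2 * n + 1),
          (-1) ^ i * ((2 * n).choose i : ℂ) * poch a i * poch b (2 * n - i) := by
        refine Finset.sum_congr rfl fun i hi => ?_
        rw [poch_neg_nat]
        have e6 : (((2 * n).descFactorial i : ℕ) : ℂ)
            = (i.factorial : ℂ) * (((2 * n).choose i : ℕ) : ℂ) := by
          exact_mod_cast congrArg (Nat.cast (R := ℂ))
            (Nat.descFactorial_eq_factorial_mul_choose _ i)
        rw [e6]
        have hfi := fact_ne i
        field_simp
    _ = ∑ i ∈ range (2 * n + 1), ∑ s ∈ range (i + 1),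
          (-1) ^ i * ((2 * n).choose i : ℂ) * ((i.choose s : ℂ) * poch (-((j : ℕ) : ℂ)) s
            * poch b (i - s)) * poch b (2 * n - i) := by
        refine Finset.sum_congr rfl fun i _ => ?_
        have hv := vand i (-((j : ℕ) : ℂ)) b
        rw [hb'] at hv
        calc (-1) ^ i * ((2 * n).choose i : ℂ) * poch a i * poch b (2 * n - i)
            = (∑ s ∈ range (i + 1), (i.choose s : ℂ) * poch (-((j : ℕ) : ℂ)) s * poch b (i - s))
                * ((-1) ^ i * ((2 * n).choose i : ℂ) * poch b (2 * n - i)) := by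
              rw [hv]; ring
          _ = _ := by
              rw [Finset.sum_mul]
              refine Finset.sum_congr rfl fun s _ => by ring
    _ = ∑ s ∈ range (2 * n + 1), ∑ m ∈ range (2 * n - s + 1),
          (-1) ^ (s + m) * ((2 * n).choose (s + m) : ℂ) * (((s + m).choose s : ℂ)
            * poch (-((j : ℕ) : ℂ)) s * poch b ((s + m) - s)) * poch b (2 * n - (s + m)) :=
        sum_triangle (2 * n) (fun i s => (-1) ^ i * ((2 * n).choose i : ℂ)
          * ((i.choose s : ℂ) * poch (-((j : ℕ) : ℂ)) s * poch b (i - s)) * poch b (2 * n - i))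
    _ = ∑ s ∈ range (2 * n + 1),
          (j.descFactorial s : ℂ) * ((2 * n).choose s : ℂ) * Tsum b (2 * n - s) := by
        refine Finset.sum_congr rfl fun s hs => ?_
        rw [Finset.mem_range] at hs
        unfold Tsum
        rw [Finset.mul_sum]
        refine Finset.sum_congr rfl fun m hm => ?_
        rw [Finset.mem_range] at hm
        have hch : (((2 * n).choose (s + m) : ℕ) : ℂ) * (((s + m).choose s : ℕ) : ℂ)
            = (((2 * n).choose s : ℕ) : ℂ) * (((2 * n - s).choose m : ℕ) : ℂ) := by
          have := Nat.choose_mul (n := 2 * n) (Nat.le_add_right s m)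
          rw [Nat.add_sub_cancel_left] at this
          exact_mod_cast congrArg (Nat.cast (R := ℂ)) this
        have hsq : ((-1 : ℂ)) ^ s * (-1) ^ s = 1 := by rw [← mul_pow]; norm_num
        rw [poch_neg_nat, show (s + m) - s = m from Nat.add_sub_cancel_left s m,
          show 2 * n - (s + m) = (2 * n - s) - m by omega, pow_add]
        linear_combination ((-1 : ℂ) ^ m * (j.descFactorial s : ℂ) * poch b m
            * poch b ((2 * n - s) - m) * (((2 * n).choose (s + m) : ℕ) : ℂ)
            * (((s + m).choose s : ℕ) : ℂ)) * hsq
          + ((-1 : ℂ) ^ m * (j.descFactorial s : ℂ) * poch b m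
            * poch b ((2 * n - s) - m)) * hch
    _ = ∑ s ∈ range (2 * (n + 1)),
          (j.descFactorial s : ℂ) * ((2 * n).choose s : ℂ) * Tsum b (2 * n - s) := by
        rw [show 2 * (n + 1) = (2 * n + 1) + 1 from by ring,
          Finset.sum_range_succ
            (fun s => (j.descFactorial s : ℂ) * ((2 * n).choose s : ℂ) * Tsum b (2 * n - s))
            (2 * n + 1),
          Nat.descFactorial_eq_zero_iff_lt.2 (show j < 2 * n + 1 by omega)]
        simp
    _ = (∑ r ∈ range (n + 1),
            (j.descFactorial (2 * r) : ℂ) * ((2 * n).choose (2 * r) : ℂ) * Tsum b (2 * n - 2 * r))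
          + ∑ r ∈ range (n + 1), (j.descFactorial (2 * r + 1) : ℂ)
              * ((2 * n).choose (2 * r + 1) : ℂ) * Tsum b (2 * n - (2 * r + 1)) :=
        sum_even_odd (n + 1)
          (fun s => (j.descFactorial s : ℂ) * ((2 * n).choose s : ℂ) * Tsum b (2 * n - s))
    _ = ∑ r ∈ range (n + 1),
          (j.descFactorial (2 * r) : ℂ) * ((2 * n).choose (2 * r) : ℂ) * Tsum b (2 * n - 2 * r) := by
        have hodd : ∑ r ∈ range (n + 1), (j.descFactorial (2 * r + 1) : ℂ)
            * ((2 * n).choose (2 * r + 1) : ℂ) * Tsum b (2 * n - (2 * r + 1)) = 0 := by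
          refine Finset.sum_eq_zero fun r hr => ?_
          rw [Finset.mem_range] at hr
          by_cases hrn : r < n
          · rw [show 2 * n - (2 * r + 1) = 2 * (n - r - 1) + 1 by omega, Tsum_odd, mul_zero]
          · rw [Nat.descFactorial_eq_zero_iff_lt.2 (show j < 2 * r + 1 by omega)]
            simp
        rw [hodd, add_zero]
    _ = ∑ r ∈ range (n + 1), (2 : ℂ) ^ (2 * n) * poch (1 / 2) n *
          ((-1 : ℂ) ^ r * (j.choose (2 * r) : ℂ) * poch (-(n : ℂ)) r * poch b (n - r)) := by
        refine Finset.sum_congr rfl fun r hr => ?_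
        rw [Finset.mem_range] at hr
        rw [show 2 * n - 2 * r = 2 * (n - r) by omega, Tsum_even, poch_neg_nat]
        have hA : j.descFactorial (2 * r) * ((2 * n).choose (2 * r)) * (2 * (n - r)).factorial
            = j.choose (2 * r) * (2 * n).factorial := by
          rw [Nat.descFactorial_eq_factorial_mul_choose]
          have h2 := Nat.choose_mul_factorial_mul_factorial (show 2 * r ≤ 2 * n by omega)
          rw [show 2 * n - 2 * r = 2 * (n - r) by omega] at h2
          calc (2 * r).factorial * j.choose (2 * r) * ((2 * n).choose (2 * r))
                * (2 * (n - r)).factorial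
              = j.choose (2 * r) * ((2 * n).choose (2 * r) * (2 * r).factorial
                  * (2 * (n - r)).factorial) := by ring
            _ = j.choose (2 * r) * (2 * n).factorial := by rw [h2]
        have hA' : (j.descFactorial (2 * r) : ℂ) * (((2 * n).choose (2 * r) : ℕ) : ℂ)
              * ((2 * (n - r)).factorial : ℂ)
            = ((j.choose (2 * r) : ℕ) : ℂ) * ((2 * n).factorial : ℂ) := by
          exact_mod_cast congrArg (Nat.cast (R := ℂ)) hA
        have hB : ((n - r).factorial : ℂ) * ((n.descFactorial r : ℕ) : ℂ)
            = ((n.factorial : ℕ) : ℂ) := by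
          exact_mod_cast congrArg (Nat.cast (R := ℂ))
            (Nat.factorial_mul_descFactorial (show r ≤ n by omega))
        have hH := poch_half n
        have hsq : ((-1 : ℂ)) ^ r * (-1) ^ r = 1 := by rw [← mul_pow]; norm_num
        have hfnr := fact_ne (n - r)
        field_simp
        linear_combination (poch b (n - r)) * hA'
          - ((j.choose (2 * r) : ℂ) * poch b (n - r)) * hH
          - ((2 : ℂ) ^ (2 * n) * poch (1 / 2) n * (j.choose (2 * r) : ℂ) * poch b (n - r)) * hB
          - ((2 : ℂ) ^ (2 * n) * poch (1 / 2) n * (j.choose (2 * r) : ℂ)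
              * (n.descFactorial r : ℂ) * poch b (n - r) * ((n - r).factorial : ℂ)) * hsq
    _ = (2 : ℂ) ^ (2 * n) * poch (1 / 2) n *
          ∑ r ∈ range (j / 2 + 1),
            (-1 : ℂ) ^ r * (j.choose (2 * r) : ℂ) * poch (-(n : ℂ)) r * poch b (n - r) := by
        rw [← Finset.mul_sum]
        congr 1
        refine (Finset.sum_subset (Finset.range_subset_range.2 (by omega)) ?_).symm
        intro r hr hnr
        rw [Finset.mem_range] at hr hnr
        rw [Nat.choose_eq_zero_of_lt (show j < 2 * r by omega)]
        simp
theorem twoF1_neg2n_a_twoApj (n j : ℕ) (hjn : j ≤ n) (a : ℂ)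
    (h : ∀ k ≤ 2 * n, poch (2 * a + j) k ≠ 0) :
    ∑ k ∈ range (2 * n + 1),
        poch (-(2 * n : ℂ)) k * poch a k * 2 ^ k / (poch (2 * a + j) k * (k.factorial : ℂ))
      = (2 : ℂ) ^ (2 * n) * poch (1 / 2) n / poch (2 * a + j) (2 * n) *
          ∑ r ∈ range (j / 2 + 1),
            (-1 : ℂ) ^ r * (j.choose (2 * r) : ℂ) * poch (-(n : ℂ)) r * poch (a + j) (n - r) := by
  set c : ℂ := 2 * a + (j : ℂ) with hc
  set b : ℂ := a + (j : ℂ) with hb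
  have hc2n : poch c (2 * n) ≠ 0 := h (2 * n) le_rfl
  have hN2 : -(2 * (n : ℂ)) = -(((2 * n : ℕ)) : ℂ) := by push_cast; ring
  have hsplit : ∀ k, k ≤ 2 * n → poch c (2 * n) = poch c k * poch (c + k) (2 * n - k) := by
    intro k hk
    rw [← poch_add]
    congr 1
    omega
  -- the key cleared identity
  have key : ∑ k ∈ range (2 * n + 1),
        poch (-(((2 * n : ℕ)) : ℂ)) k * poch a k * 2 ^ k * poch (c + k) (2 * n - k)
          / (k.factorial : ℂ)
      = (2 : ℂ) ^ (2 * n) * poch (1 / 2) n *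
          ∑ r ∈ range (j / 2 + 1),
            (-1 : ℂ) ^ r * (j.choose (2 * r) : ℂ) * poch (-(n : ℂ)) r * poch b (n - r) :=
    keylem n j hjn a c b hc hb
  -- conclude from key
  have step0 : ∀ k ∈ range (2 * n + 1),
      poch (-(2 * n : ℂ)) k * poch a k * 2 ^ k / (poch c k * (k.factorial : ℂ))
        = (poch (-(((2 * n : ℕ)) : ℂ)) k * poch a k * 2 ^ k * poch (c + k) (2 * n - k)
            / (k.factorial : ℂ)) / poch c (2 * n) := by
    intro k hk
    rw [Finset.mem_range] at hk
    have hk' : k ≤ 2 * n := by omega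
    have h1 : poch c k ≠ 0 := h k hk'
    have h2 : poch (c + k) (2 * n - k) ≠ 0 := by
      intro h0
      exact hc2n (by rw [hsplit k hk', h0, mul_zero])
    rw [← hN2, hsplit k hk']
    field_simp
  rw [Finset.sum_congr rfl step0, ← Finset.sum_div, key]
  ring
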